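/- Let G = (V, E) be a graph and let k ≤ |V|. Let D' be the digraph with vertices {v_0, v_1 : v ∈ V} together with fresh vertices p^{v,w}_i and p^{w,v}_i for every edge {v, w} ∈ E and every 1 ≤ i ≤ |V|+1, and with arcs: (v_0, v_1) for every v ∈ V, and for every edge {v, w} ∈ E and every 1 ≤ i ≤ |V|+1 the arcs (v_1, p^{v,w}_i), (p^{v,w}_i, w_0), (w_1, p^{w,v}_i), (p^{w,v}_i, v_0). Let A_V = {(v_0, v_1) : v ∈ V}. Then {F ∩ A_V : F a feedback arc set of D' with |F| ≤ k} = {{(v_0, v_1) : v ∈ S} : S a vertex cover of G with |S| ≤ k}. -/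

import Mathlib

/-- The relation `A` (the arc relation of a digraph) has a directed cycle:
a nonempty closed directed walk with no repeated vertices. -/
def HasDicycle {V : Type*} (A : V → V → Prop) : Prop :=
  ∃ (v : V) (l : List V), (v :: l).Nodup ∧
    List.Chain A v l ∧ A ((v :: l).getLast (List.cons_ne_nil v l)) v

/-- Vertices of the digraph `D'` of the Vertex-Cover-to-Feedback-Arc-Set reduction:
`v_0 = (v, false)` and `v_1 = (v, true)` for every vertex `v`, together with fresh
vertices `p^{v,w}_i` for every (ordered) edge `(v,w)` of `G` and every `1 ≤ i ≤ |V|+1`. -/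
abbrev FASVert {α : Type*} [Fintype α] (G : SimpleGraph α) :=
  (α × Bool) ⊕ ({p : α × α // G.Adj p.1 p.2} × Fin (Fintype.card α + 1))

/-- Arcs of `D'`: `(v_0, v_1)` for every `v`, and for every edge `{v,w}` of `G` and every
`1 ≤ i ≤ |V|+1` the arcs `(v_1, p^{v,w}_i)`, `(p^{v,w}_i, w_0)`, `(w_1, p^{w,v}_i)`,
`(p^{w,v}_i, v_0)`. -/
def fasArc {α : Type*} [Fintype α] (G : SimpleGraph α) : FASVert G → FASVert G → Prop :=
  fun u v =>
    (∃ a : α, u = Sum.inl (a, false) ∧ v = Sum.inl (a, true)) ∨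
    (∃ (p : {p : α × α // G.Adj p.1 p.2}) (i : Fin (Fintype.card α + 1)),
      (u = Sum.inl (p.1.1, true) ∧ v = Sum.inr (p, i)) ∨
      (u = Sum.inr (p, i) ∧ v = Sum.inl (p.1.2, false)))

lemma rank_chain {V : Type*} {A : V → V → Prop} {r : V → ℕ}
    (h : ∀ u v, A u v → r u < r v) :
    ∀ (l : List V) (v : V), List.Chain A v l → r v ≤ r ((v :: l).getLast (List.cons_ne_nil v l)) := by
  intro l
  induction l with
  | nil => intro v _; simp
  | cons b t ih =>
    intro v hc
    simp only [List.Chain, List.isChain_cons_cons] at hc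
    have := ih b hc.2
    have h2 := h v b hc.1
    rw [List.getLast_cons (List.cons_ne_nil b t)]
    omega

lemma no_dicycle_of_rank {V : Type*} {A : V → V → Prop} (r : V → ℕ)
    (h : ∀ u v, A u v → r u < r v) : ¬ HasDicycle A := by
  rintro ⟨v, l, -, hc, hlast⟩
  have := rank_chain h l v hc
  have := h _ _ hlast
  omega

set_option synthInstance.maxSize 512
set_option synthInstance.maxHeartbeats 800000

/-- with `A_V = {(v_0, v_1) : v ∈ V}` and `k ≤ |V|`,
`{F ∩ A_V : F a feedback arc set of D' with |F| ≤ k}`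
` = {{(v_0,v_1) : v ∈ S} : S a vertex cover of G with |S| ≤ k}`. -/
theorem stmt_6 {α : Type*} [Fintype α] [DecidableEq α] (G : SimpleGraph α)
    (k : ℕ) (hk : k ≤ Fintype.card α) :
    {T : Finset (FASVert G × FASVert G) | ∃ F : Finset (FASVert G × FASVert G),
        (∀ p ∈ F, fasArc G p.1 p.2) ∧
        (¬ HasDicycle (fun u v => fasArc G u v ∧ (u, v) ∉ F)) ∧
        F.card ≤ k ∧
        T = F ∩ Finset.univ.image
          (fun a : α => ((Sum.inl (a, false) : FASVert G), (Sum.inl (a, true) : FASVert G)))}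
      = {T : Finset (FASVert G × FASVert G) | ∃ S : Finset α,
          (∀ u v, G.Adj u v → u ∈ S ∨ v ∈ S) ∧ S.card ≤ k ∧
          T = S.image
            (fun a => ((Sum.inl (a, false) : FASVert G), (Sum.inl (a, true) : FASVert G)))} := by
  ext T
  simp only [Set.mem_setOf_eq]
  set f : α → FASVert G × FASVert G :=
    fun a => ((Sum.inl (a, false) : FASVert G), (Sum.inl (a, true) : FASVert G)) with hf
  have hfinj : Function.Injective f := by
    intro a b hab
    simpa [hf, Prod.ext_iff] using hab
  constructor
  · -- FAS → vertex cover
    rintro ⟨F, hFarc, hNoCyc, hFcard, hT⟩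
    set S : Finset α := Finset.univ.filter (fun a => f a ∈ F) with hS
    have hmemS : ∀ a : α, a ∈ S ↔ f a ∈ F := by
      intro a; simp [hS]
    refine ⟨S, ?_, ?_, ?_⟩
    · -- vertex cover
      intro u v huv
      by_contra hcon
      push_neg at hcon
      obtain ⟨hu, hv⟩ := hcon
      rw [hmemS] at hu hv
      set p : {p : α × α // G.Adj p.1 p.2} := ⟨(u, v), huv⟩ with hp
      set q : {p : α × α // G.Adj p.1 p.2} := ⟨(v, u), huv.symm⟩ with hq
      -- counting: find i with both arcs at p_i not in F
      have key : ∀ (x : {p : α × α // G.Adj p.1 p.2}),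
          ∃ i : Fin (Fintype.card α + 1),
            ((Sum.inl (x.1.1, true) : FASVert G), (Sum.inr (x, i) : FASVert G)) ∉ F ∧
            ((Sum.inr (x, i) : FASVert G), (Sum.inl (x.1.2, false) : FASVert G)) ∉ F := by
        intro x
        by_contra hc
        push_neg at hc
        set g : Fin (Fintype.card α + 1) → FASVert G × FASVert G := fun i =>
          if ((Sum.inl (x.1.1, true) : FASVert G), (Sum.inr (x, i) : FASVert G)) ∈ F
          then ((Sum.inl (x.1.1, true) : FASVert G), (Sum.inr (x, i) : FASVert G))
          else ((Sum.inr (x, i) : FASVert G), (Sum.inl (x.1.2, false) : FASVert G)) with hg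
        have hgmem : ∀ i, g i ∈ F := by
          intro i
          by_cases h : ((Sum.inl (x.1.1, true) : FASVert G), (Sum.inr (x, i) : FASVert G)) ∈ F
          · simp [hg, h]
          · have := hc i h
            simpa [hg, h]
        have hginj : Function.Injective g := by
          intro i j hij
          rw [hg] at hij
          dsimp only at hij
          split at hij <;> split at hij <;>
            simp_all [Prod.ext_iff]
        have : Fintype.card α + 1 ≤ F.card := by
          calc Fintype.card α + 1 = Fintype.card (Fin (Fintype.card α + 1)) := by simp
          _ ≤ Fintype.card F := Fintype.card_le_of_injective (fun i => (⟨g i, hgmem i⟩ : F))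
              (fun i j hij => hginj (by simpa using hij))
          _ = F.card := Fintype.card_coe F
        omega
      obtain ⟨i, hi1, hi2⟩ := key p
      obtain ⟨j, hj1, hj2⟩ := key q
      -- build the 6-cycle
      apply hNoCyc
      refine ⟨Sum.inl (u, false),
        [Sum.inl (u, true), Sum.inr (p, i), Sum.inl (v, false), Sum.inl (v, true), Sum.inr (q, j)],
        ?_, ?_, ?_⟩
      · have hne : u ≠ v := G.ne_of_adj huv
        have hpq : p ≠ q := by
          intro h
          rw [hp, hq] at h
          exact hne (congrArg (fun z => z.1.1) h)
        simp [hne, hpq]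
      · refine List.Chain.cons ⟨Or.inl ⟨u, rfl, rfl⟩, hu⟩ ?_
        refine List.Chain.cons ⟨Or.inr ⟨p, i, Or.inl ⟨rfl, rfl⟩⟩, hi1⟩ ?_
        refine List.Chain.cons ⟨Or.inr ⟨p, i, Or.inr ⟨rfl, rfl⟩⟩, hi2⟩ ?_
        refine List.Chain.cons ⟨Or.inl ⟨v, rfl, rfl⟩, hv⟩ ?_
        refine List.Chain.cons ⟨Or.inr ⟨q, j, Or.inl ⟨rfl, rfl⟩⟩, hj1⟩ ?_
        exact List.Chain.nil
      · show fasArc G _ _ ∧ _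
        constructor
        · exact Or.inr ⟨q, j, Or.inr ⟨rfl, rfl⟩⟩
        · simpa using hj2
    · -- card
      have : S.card = (S.image f).card := (Finset.card_image_of_injective S hfinj).symm
      have hsub : S.image f ⊆ F := by
        intro x hx
        obtain ⟨a, ha, rfl⟩ := Finset.mem_image.mp hx
        exact (hmemS a).mp ha
      calc S.card = (S.image f).card := this
        _ ≤ F.card := Finset.card_le_card hsub
        _ ≤ k := hFcard
    · -- T = S.image f
      rw [hT]
      ext x
      simp only [Finset.mem_inter, Finset.mem_image, Finset.mem_univ, true_and]
      constructor
      · rintro ⟨hxF, a, rfl⟩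
        exact ⟨a, (hmemS a).mpr hxF, rfl⟩
      · rintro ⟨a, ha, rfl⟩
        exact ⟨(hmemS a).mp ha, a, rfl⟩
  · -- vertex cover → FAS
    rintro ⟨S, hcov, hScard, hT⟩
    refine ⟨S.image f, ?_, ?_, ?_, ?_⟩
    · rintro x hx
      obtain ⟨a, -, rfl⟩ := Finset.mem_image.mp hx
      exact Or.inl ⟨a, rfl, rfl⟩
    · -- no dicycle
      apply no_dicycle_of_rank (r := fun w => match w with
        | Sum.inl (a, false) => if a ∈ S then 8 else 2
        | Sum.inl (a, true) => if a ∈ S then 0 else 4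
        | Sum.inr (x, _) => if x.1.2 ∈ S then 6 else 1)
      rintro w₁ w₂ ⟨harc, hnF⟩
      rcases harc with ⟨a, rfl, rfl⟩ | ⟨x, i, ⟨rfl, rfl⟩ | ⟨rfl, rfl⟩⟩
      · have haS : a ∉ S := by
          intro ha
          exact hnF (Finset.mem_image_of_mem f ha)
        simp [haS]
      · rcases hcov _ _ x.2 with h1 | h2
        · by_cases hb : x.1.2 ∈ S <;> simp [h1, hb]
        · by_cases ha : x.1.1 ∈ S <;> simp [ha, h2]
      · by_cases h2 : x.1.2 ∈ S <;> simp [h2]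
    · calc (S.image f).card ≤ S.card := Finset.card_image_le
        _ ≤ k := hScard
    · rw [hT, Finset.inter_eq_left.mpr]
      exact Finset.image_subset_image (Finset.subset_univ S)
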